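/- Let α, β > 0, D > 0 and D₁ ≥ 16D. Define Γ_γ(t) = ∫₀ᵗ (1+s)^{-γ} ds. Then there exists C > 0 such that for all t ≥ 0 and x ∈ ℝ³: ∫₀ᵗ ∫_{ℝ³} (1+t−s)^{-α} e^{-|x−y|²/(D(1+t−s))} (1+s)^{-β} e^{-2|y|²/(D₁(1+s))} dy ds ≤ C ((1+t)^{-α} Γ_{β−3/2}(t) + (1+t)^{-β} Γ_{α−3/2}(t)) e^{-3|x|²/(2D₁(1+t))}. -/

import Mathlib

open MeasureTheory Real

/-- `Γ_γ(t) = ∫₀ᵗ (1+s)^{-γ} ds`. -/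
noncomputable def GammaInt (γ t : ℝ) : ℝ := ∫ s in (0 : ℝ)..t, (1 + s) ^ (-γ)

private lemma gauss_integrable3 {c : ℝ} (hc : 0 < c) (z : EuclideanSpace ℝ (Fin 3)) :
    Integrable (fun y : EuclideanSpace ℝ (Fin 3) => rexp (-c * ‖y - z‖ ^ 2)) := by
  have h := GaussianFourier.integrable_cexp_neg_mul_sq_norm_add
    (V := EuclideanSpace ℝ (Fin 3)) (b := (c : ℂ)) (by simpa using hc) 0 0
  have h2 : Integrable (fun y : EuclideanSpace ℝ (Fin 3) => rexp (-c * ‖y‖ ^ 2)) := by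
    refine h.re.congr (Filter.Eventually.of_forall fun y => ?_)
    simp only [zero_mul, add_zero]
    rw [show (-(c : ℂ) * (‖y‖ : ℝ) ^ 2 : ℂ) = ((-c * ‖y‖ ^ 2 : ℝ) : ℂ) by push_cast; ring]
    exact Complex.exp_ofReal_re _
  exact h2.comp_sub_right z

private lemma gauss_integral3 {c : ℝ} (hc : 0 < c) (z : EuclideanSpace ℝ (Fin 3)) :
    ∫ y : EuclideanSpace ℝ (Fin 3), rexp (-c * ‖y - z‖ ^ 2) = (π / c) ^ ((3 : ℝ) / 2) := by
  rw [integral_sub_right_eq_self (fun y : EuclideanSpace ℝ (Fin 3) => rexp (-c * ‖y‖ ^ 2)) z,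
    GaussianFourier.integral_rexp_neg_mul_sq_norm hc]
  norm_num

private lemma infconv3 {a b : ℝ} (ha : 0 < a) (hb : 0 < b) (x y : EuclideanSpace ℝ (Fin 3)) :
    a * b / (a + b) * ‖x‖ ^ 2 ≤ a * ‖x - y‖ ^ 2 + b * ‖y‖ ^ 2 := by
  have hx : ‖x‖ ≤ ‖x - y‖ + ‖y‖ := by
    calc ‖x‖ = ‖x - y + y‖ := by rw [sub_add_cancel]
    _ ≤ _ := norm_add_le _ _
  have h0 : (0:ℝ) ≤ ‖x‖ := norm_nonneg x
  have h1 : (0:ℝ) ≤ ‖x - y‖ := norm_nonneg _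
  have h2 : (0:ℝ) ≤ ‖y‖ := norm_nonneg _
  have hxx : ‖x‖ ^ 2 ≤ (‖x - y‖ + ‖y‖) ^ 2 := by nlinarith
  rw [div_mul_eq_mul_div, div_le_iff₀ (by positivity)]
  nlinarith [sq_nonneg (a * ‖x - y‖ - b * ‖y‖), mul_pos ha hb,
    mul_le_mul_of_nonneg_left hxx (mul_pos ha hb).le]

private lemma inner_bound3 {c P : ℝ} (hc : 0 < c) (z : EuclideanSpace ℝ (Fin 3))
    {F : EuclideanSpace ℝ (Fin 3) → ℝ} (hF0 : ∀ y, 0 ≤ F y)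
    (hFH : ∀ y, F y ≤ P * rexp (-c * ‖y - z‖ ^ 2)) :
    ∫ y, F y ≤ P * (π / c) ^ ((3 : ℝ) / 2) := by
  calc ∫ y, F y ≤ ∫ y, P * rexp (-c * ‖y - z‖ ^ 2) :=
        integral_mono_of_nonneg (Filter.Eventually.of_forall hF0)
          ((gauss_integrable3 hc z).const_mul P) (Filter.Eventually.of_forall hFH)
  _ = P * (π / c) ^ ((3 : ℝ) / 2) := by rw [MeasureTheory.integral_const_mul, gauss_integral3 hc z]

private lemma half_rpow {T A γ : ℝ} (hT : 0 < T) (hA : T / 2 ≤ A) (hγ : 0 ≤ γ) :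
    A ^ (-γ) ≤ 2 ^ γ * T ^ (-γ) := by
  have h : (T / 2) ^ (-γ) = 2 ^ γ * T ^ (-γ) := by
    rw [Real.div_rpow hT.le (by norm_num : (0:ℝ) ≤ 2),
      Real.rpow_neg (by norm_num : (0:ℝ) ≤ 2), div_eq_mul_inv, inv_inv, mul_comm]
  rw [← h]
  exact Real.rpow_le_rpow_of_nonpos (by positivity) hA (neg_nonpos.mpr hγ)

set_option maxHeartbeats 1600000 in
/-- Nonlinear coupling estimate of two diffusion waves in ℝ³. -/
theorem diffusion_diffusion_coupling (α β D D₁ : ℝ) (hα : 0 < α) (hβ : 0 < β)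
    (hD : 0 < D) (hD₁ : 16 * D ≤ D₁) :
    ∃ C > 0, ∀ t : ℝ, 0 ≤ t → ∀ x : EuclideanSpace ℝ (Fin 3),
      (∫ s in (0 : ℝ)..t, ∫ y : EuclideanSpace ℝ (Fin 3),
          (1 + t - s) ^ (-α) * Real.exp (-‖x - y‖ ^ 2 / (D * (1 + t - s))) *
            ((1 + s) ^ (-β) * Real.exp (-2 * ‖y‖ ^ 2 / (D₁ * (1 + s)))))
        ≤ C * ((1 + t) ^ (-α) * GammaInt (β - 3 / 2) t
              + (1 + t) ^ (-β) * GammaInt (α - 3 / 2) t) *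
            Real.exp (-3 * ‖x‖ ^ 2 / (2 * D₁ * (1 + t))) := by
  have hD₁pos : (0:ℝ) < D₁ := lt_of_lt_of_le (by linarith) hD₁
  have h16pos : (0:ℝ) < 16 * π * D₁ / 5 :=
    div_pos (mul_pos (mul_pos (by norm_num) Real.pi_pos) hD₁pos) (by norm_num)
  refine ⟨2 ^ (α + β) * (16 * π * D₁ / 5) ^ ((3:ℝ)/2), by positivity, ?_⟩
  intro t ht x
  set K : ℝ := 2 ^ (α + β) * (16 * π * D₁ / 5) ^ ((3:ℝ)/2) with hKdef
  have hKpos : 0 < K := by positivity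
  have hT : (0:ℝ) < 1 + t := by linarith
  set Ex : ℝ := rexp (-3 * ‖x‖ ^ 2 / (2 * D₁ * (1 + t))) with hExdef
  have hExpos : 0 < Ex := by rw [hExdef]; exact Real.exp_pos _
  -- the dominating function
  set g : ℝ → ℝ := fun s =>
    K * Ex * (1 + t) ^ (-α) * (1 + s) ^ (-(β - 3/2))
      + K * Ex * (1 + t) ^ (-β) * (1 + t - s) ^ (-(α - 3/2)) with hgdef
  have hcont1 : IntervalIntegrable
      (fun s : ℝ => K * Ex * (1 + t) ^ (-α) * (1 + s) ^ (-(β - 3/2))) volume 0 t := by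
    apply ContinuousOn.intervalIntegrable
    apply ContinuousOn.mul continuousOn_const
    apply ContinuousOn.rpow_const (by fun_prop)
    intro s hs
    rw [Set.uIcc_of_le ht] at hs
    exact Or.inl (by have := hs.1; positivity)
  have hcont2 : IntervalIntegrable
      (fun s : ℝ => K * Ex * (1 + t) ^ (-β) * (1 + t - s) ^ (-(α - 3/2))) volume 0 t := by
    apply ContinuousOn.intervalIntegrable
    apply ContinuousOn.mul continuousOn_const
    apply ContinuousOn.rpow_const (by fun_prop)
    intro s hs
    rw [Set.uIcc_of_le ht] at hs
    exact Or.inl (by have h1 := hs.1; have h2 := hs.2; nlinarith)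
  have hg_int : IntervalIntegrable g volume 0 t := by
    rw [hgdef]; exact hcont1.add hcont2
  -- key pointwise (in s) estimate
  have key : ∀ s ∈ Set.Icc (0:ℝ) t,
      (∫ y : EuclideanSpace ℝ (Fin 3),
          (1 + t - s) ^ (-α) * Real.exp (-‖x - y‖ ^ 2 / (D * (1 + t - s))) *
            ((1 + s) ^ (-β) * Real.exp (-2 * ‖y‖ ^ 2 / (D₁ * (1 + s))))) ≤ g s := by
    intro s hs
    obtain ⟨hs0, hst⟩ := hs
    have hA : (0:ℝ) < 1 + t - s := by linarith
    have hB : (0:ℝ) < 1 + s := by linarith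
    have hA1 : 1 + t - s ≤ 1 + t := by linarith
    have hB1 : 1 + s ≤ 1 + t := by linarith
    set A : ℝ := 1 + t - s with hAdef
    set B : ℝ := 1 + s with hBdef
    set a : ℝ := 1 / (D * A) with hadef
    set b : ℝ := 2 / (D₁ * B) with hbdef
    have ha : 0 < a := by rw [hadef]; positivity
    have hb : 0 < b := by rw [hbdef]; positivity
    clear_value A B
    clear_value a b
    have hsum : 16 / (9 * D₁ * (1 + t)) ≤ a * b / (a + b) := by
      have h9 : a * b / (a + b) = 1 / (D * A + D₁ * B / 2) := by
        rw [hadef, hbdef]; field_simp; ring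
      rw [h9, div_le_div_iff₀ (by positivity) (by positivity)]
      have h1 : 16 * D * A ≤ D₁ * A := by nlinarith
      have h2 : D₁ * A ≤ D₁ * (1 + t) := by nlinarith
      have h3 : D₁ * B ≤ D₁ * (1 + t) := by nlinarith
      nlinarith
    have hxbound : ∀ y : EuclideanSpace ℝ (Fin 3),
        3 * ‖x‖ ^ 2 / (2 * D₁ * (1 + t)) ≤
          27/32 * (a * ‖x - y‖ ^ 2 + b * ‖y‖ ^ 2) := by
      intro y
      have h1 := infconv3 ha hb x y
      have h2 : 16 / (9 * D₁ * (1 + t)) * ‖x‖ ^ 2 ≤ a * b / (a + b) * ‖x‖ ^ 2 :=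
        mul_le_mul_of_nonneg_right hsum (sq_nonneg _)
      have h3 : 3 * ‖x‖ ^ 2 / (2 * D₁ * (1 + t)) =
          27/32 * (16 / (9 * D₁ * (1 + t)) * ‖x‖ ^ 2) := by
        field_simp; ring
      rw [h3]; linarith
    have e1 : ∀ y : EuclideanSpace ℝ (Fin 3),
        -‖x - y‖ ^ 2 / (D * A) = -(a * ‖x - y‖ ^ 2) := by
      intro y; rw [hadef, neg_div, one_div_mul_eq_div]
    have e2 : ∀ y : EuclideanSpace ℝ (Fin 3),
        -2 * ‖y‖ ^ 2 / (D₁ * B) = -(b * ‖y‖ ^ 2) := by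
      intro y; rw [hbdef, neg_mul, neg_div, div_mul_eq_mul_div]
    rcases le_total s (t/2) with hhalf | hhalf
    · -- s ≤ t/2 : Gaussian in y near the origin
      have hA2 : (1 + t) / 2 ≤ A := by rw [hAdef]; linarith
      have hpt : ∀ y : EuclideanSpace ℝ (Fin 3),
          A ^ (-α) * Real.exp (-‖x - y‖ ^ 2 / (D * A)) *
            (B ^ (-β) * Real.exp (-2 * ‖y‖ ^ 2 / (D₁ * B)))
          ≤ (A ^ (-α) * B ^ (-β) * Ex) * rexp (-(5/32*b) * ‖y - 0‖ ^ 2) := by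
        intro y
        have hprod : Real.exp (-(a * ‖x - y‖ ^ 2)) * Real.exp (-(b * ‖y‖ ^ 2))
            ≤ Ex * rexp (-(5/32*b) * ‖y - 0‖ ^ 2) := by
          rw [hExdef, ← Real.exp_add, ← Real.exp_add, sub_zero]
          apply Real.exp_le_exp.mpr
          have h4 := hxbound y
          have h5 : 0 ≤ a * ‖x - y‖ ^ 2 := by positivity
          have h6 : 0 ≤ b * ‖y‖ ^ 2 := by positivity
          have h7 : -3 * ‖x‖ ^ 2 / (2 * D₁ * (1 + t)) =
              -(3 * ‖x‖ ^ 2 / (2 * D₁ * (1 + t))) := by ring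
          rw [h7]
          linarith
        calc A ^ (-α) * Real.exp (-‖x - y‖ ^ 2 / (D * A)) *
              (B ^ (-β) * Real.exp (-2 * ‖y‖ ^ 2 / (D₁ * B)))
            = (A ^ (-α) * B ^ (-β)) *
              (Real.exp (-(a * ‖x - y‖ ^ 2)) * Real.exp (-(b * ‖y‖ ^ 2))) := by
              rw [e1 y, e2 y]; ring
          _ ≤ (A ^ (-α) * B ^ (-β)) * (Ex * rexp (-(5/32*b) * ‖y - 0‖ ^ 2)) := by
              apply mul_le_mul_of_nonneg_left hprod (by positivity)
          _ = (A ^ (-α) * B ^ (-β) * Ex) * rexp (-(5/32*b) * ‖y - 0‖ ^ 2) := by ring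
      have hFb := inner_bound3 (c := 5/32*b) (P := A ^ (-α) * B ^ (-β) * Ex)
        (by positivity) 0 (fun y => by positivity) hpt
      have hπeq : π / (5/32*b) = 16 * π * D₁ / 5 * B := by
        rw [hbdef]; field_simp; ring
      have hBB : B ^ (-β) * B ^ ((3:ℝ)/2) = B ^ (-(β - 3/2)) := by
        rw [← Real.rpow_add hB]; congr 1; ring
      have hAp := half_rpow hT hA2 hα.le
      have h2p : (2:ℝ) ^ α ≤ 2 ^ (α + β) :=
        Real.rpow_le_rpow_of_exponent_le one_le_two (by linarith)
      calc (∫ y : EuclideanSpace ℝ (Fin 3),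
              A ^ (-α) * Real.exp (-‖x - y‖ ^ 2 / (D * A)) *
                ((B) ^ (-β) * Real.exp (-2 * ‖y‖ ^ 2 / (D₁ * B))))
          ≤ (A ^ (-α) * B ^ (-β) * Ex) * (π / (5/32*b)) ^ ((3:ℝ)/2) := hFb
        _ = (A ^ (-α) * B ^ (-β) * Ex) *
            ((16 * π * D₁ / 5) ^ ((3:ℝ)/2) * B ^ ((3:ℝ)/2)) := by
            rw [hπeq, Real.mul_rpow h16pos.le hB.le]
        _ = (16 * π * D₁ / 5) ^ ((3:ℝ)/2) * Ex * (B ^ (-β) * B ^ ((3:ℝ)/2)) * A ^ (-α) := by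
            ring
        _ ≤ (16 * π * D₁ / 5) ^ ((3:ℝ)/2) * Ex * (B ^ (-β) * B ^ ((3:ℝ)/2)) *
            (2 ^ α * (1 + t) ^ (-α)) := by
            apply mul_le_mul_of_nonneg_left hAp (by positivity)
        _ ≤ (16 * π * D₁ / 5) ^ ((3:ℝ)/2) * Ex * (B ^ (-β) * B ^ ((3:ℝ)/2)) *
            (2 ^ (α + β) * (1 + t) ^ (-α)) := by
            apply mul_le_mul_of_nonneg_left _ (by positivity)
            exact mul_le_mul_of_nonneg_right h2p (by positivity)
        _ = K * Ex * (1 + t) ^ (-α) * B ^ (-(β - 3/2)) := by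
            rw [hBB, hKdef]; ring
        _ ≤ g s := by
            simp only [hgdef]
            rw [← hBdef, ← hAdef]
            have h0 : 0 ≤ K * Ex * (1 + t) ^ (-β) * A ^ (-(α - 3/2)) := by positivity
            linarith
    · -- t/2 ≤ s : Gaussian in y near x
      have hB2 : (1 + t) / 2 ≤ B := by rw [hBdef]; linarith
      have hpt : ∀ y : EuclideanSpace ℝ (Fin 3),
          A ^ (-α) * Real.exp (-‖x - y‖ ^ 2 / (D * A)) *
            (B ^ (-β) * Real.exp (-2 * ‖y‖ ^ 2 / (D₁ * B)))
          ≤ (A ^ (-α) * B ^ (-β) * Ex) * rexp (-(5/32*a) * ‖y - x‖ ^ 2) := by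
        intro y
        have hnorm : ‖y - x‖ = ‖x - y‖ := norm_sub_rev _ _
        have hprod : Real.exp (-(a * ‖x - y‖ ^ 2)) * Real.exp (-(b * ‖y‖ ^ 2))
            ≤ Ex * rexp (-(5/32*a) * ‖y - x‖ ^ 2) := by
          rw [hExdef, ← Real.exp_add, ← Real.exp_add, hnorm]
          apply Real.exp_le_exp.mpr
          have h4 := hxbound y
          have h5 : 0 ≤ a * ‖x - y‖ ^ 2 := by positivity
          have h6 : 0 ≤ b * ‖y‖ ^ 2 := by positivity
          have h7 : -3 * ‖x‖ ^ 2 / (2 * D₁ * (1 + t)) =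
              -(3 * ‖x‖ ^ 2 / (2 * D₁ * (1 + t))) := by ring
          rw [h7]
          linarith
        calc A ^ (-α) * Real.exp (-‖x - y‖ ^ 2 / (D * A)) *
              (B ^ (-β) * Real.exp (-2 * ‖y‖ ^ 2 / (D₁ * B)))
            = (A ^ (-α) * B ^ (-β)) *
              (Real.exp (-(a * ‖x - y‖ ^ 2)) * Real.exp (-(b * ‖y‖ ^ 2))) := by
              rw [e1 y, e2 y]; ring
          _ ≤ (A ^ (-α) * B ^ (-β)) * (Ex * rexp (-(5/32*a) * ‖y - x‖ ^ 2)) := by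
              apply mul_le_mul_of_nonneg_left hprod (by positivity)
          _ = (A ^ (-α) * B ^ (-β) * Ex) * rexp (-(5/32*a) * ‖y - x‖ ^ 2) := by ring
      have hFb := inner_bound3 (c := 5/32*a) (P := A ^ (-α) * B ^ (-β) * Ex)
        (by positivity) x (fun y => by positivity) hpt
      have hπle : π / (5/32*a) ≤ 16 * π * D₁ / 5 * A := by
        have hπeq : π / (5/32*a) = 32 * π * D * A / 5 := by
          rw [hadef]; field_simp
        rw [hπeq]
        have hpa : 0 ≤ π * A := (mul_pos Real.pi_pos hA).le
        nlinarith [mul_nonneg (sub_nonneg.mpr hD₁) hpa, mul_nonneg hpa hD.le]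
      have hAA : A ^ (-α) * A ^ ((3:ℝ)/2) = A ^ (-(α - 3/2)) := by
        rw [← Real.rpow_add hA]; congr 1; ring
      have hBp := half_rpow hT hB2 hβ.le
      have h2p : (2:ℝ) ^ β ≤ 2 ^ (α + β) :=
        Real.rpow_le_rpow_of_exponent_le one_le_two (by linarith)
      calc (∫ y : EuclideanSpace ℝ (Fin 3),
              A ^ (-α) * Real.exp (-‖x - y‖ ^ 2 / (D * A)) *
                ((B) ^ (-β) * Real.exp (-2 * ‖y‖ ^ 2 / (D₁ * B))))
          ≤ (A ^ (-α) * B ^ (-β) * Ex) * (π / (5/32*a)) ^ ((3:ℝ)/2) := hFb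
        _ ≤ (A ^ (-α) * B ^ (-β) * Ex) *
            ((16 * π * D₁ / 5) ^ ((3:ℝ)/2) * A ^ ((3:ℝ)/2)) := by
            apply mul_le_mul_of_nonneg_left _ (by positivity)
            rw [← Real.mul_rpow h16pos.le hA.le]
            exact Real.rpow_le_rpow (by positivity) hπle (by norm_num)
        _ = (16 * π * D₁ / 5) ^ ((3:ℝ)/2) * Ex * (A ^ (-α) * A ^ ((3:ℝ)/2)) * B ^ (-β) := by
            ring
        _ ≤ (16 * π * D₁ / 5) ^ ((3:ℝ)/2) * Ex * (A ^ (-α) * A ^ ((3:ℝ)/2)) *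
            (2 ^ β * (1 + t) ^ (-β)) := by
            apply mul_le_mul_of_nonneg_left hBp (by positivity)
        _ ≤ (16 * π * D₁ / 5) ^ ((3:ℝ)/2) * Ex * (A ^ (-α) * A ^ ((3:ℝ)/2)) *
            (2 ^ (α + β) * (1 + t) ^ (-β)) := by
            apply mul_le_mul_of_nonneg_left _ (by positivity)
            exact mul_le_mul_of_nonneg_right h2p (by positivity)
        _ = K * Ex * (1 + t) ^ (-β) * A ^ (-(α - 3/2)) := by
            rw [hAA, hKdef]; ring
        _ ≤ g s := by
            simp only [hgdef]
            rw [← hBdef, ← hAdef]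
            have h0 : 0 ≤ K * Ex * (1 + t) ^ (-α) * B ^ (-(β - 3/2)) := by positivity
            linarith
  -- substitution for the second Gamma integral
  have hsub : (∫ s in (0:ℝ)..t, (1 + t - s) ^ (-(α - 3/2))) = GammaInt (α - 3/2) t := by
    have h := intervalIntegral.integral_comp_sub_left (a := (0:ℝ)) (b := t)
      (fun u => (1 + u) ^ (-(α - 3/2))) t
    simp only [sub_self, sub_zero] at h
    calc (∫ s in (0:ℝ)..t, (1 + t - s) ^ (-(α - 3/2)))
        = ∫ s in (0:ℝ)..t, (1 + (t - s)) ^ (-(α - 3/2)) := by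
          simp only [add_sub_assoc]
      _ = GammaInt (α - 3/2) t := h
  -- conclude
  by_cases hInt : IntervalIntegrable (fun s =>
      ∫ y : EuclideanSpace ℝ (Fin 3),
        (1 + t - s) ^ (-α) * Real.exp (-‖x - y‖ ^ 2 / (D * (1 + t - s))) *
          ((1 + s) ^ (-β) * Real.exp (-2 * ‖y‖ ^ 2 / (D₁ * (1 + s))))) volume 0 t
  · calc (∫ s in (0:ℝ)..t, ∫ y : EuclideanSpace ℝ (Fin 3),
            (1 + t - s) ^ (-α) * Real.exp (-‖x - y‖ ^ 2 / (D * (1 + t - s))) *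
              ((1 + s) ^ (-β) * Real.exp (-2 * ‖y‖ ^ 2 / (D₁ * (1 + s)))))
        ≤ ∫ s in (0:ℝ)..t, g s := intervalIntegral.integral_mono_on ht hInt hg_int key
      _ = K * ((1 + t) ^ (-α) * GammaInt (β - 3/2) t
            + (1 + t) ^ (-β) * GammaInt (α - 3/2) t) * Ex := by
          rw [hgdef]
          rw [intervalIntegral.integral_add hcont1 hcont2,
            intervalIntegral.integral_const_mul, intervalIntegral.integral_const_mul, hsub]
          have hG : GammaInt (β - 3/2) t = ∫ s in (0:ℝ)..t, (1 + s) ^ (-(β - 3/2)) := rfl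
          rw [hG]; ring
  · rw [intervalIntegral.integral_undef hInt]
    have hΓ1 : 0 ≤ GammaInt (β - 3/2) t :=
      intervalIntegral.integral_nonneg ht
        (fun u hu => Real.rpow_nonneg (by linarith [hu.1]) _)
    have hΓ2 : 0 ≤ GammaInt (α - 3/2) t :=
      intervalIntegral.integral_nonneg ht
        (fun u hu => Real.rpow_nonneg (by linarith [hu.1]) _)
    have hmid : 0 ≤ (1 + t) ^ (-α) * GammaInt (β - 3/2) t
        + (1 + t) ^ (-β) * GammaInt (α - 3/2) t :=
      add_nonneg (mul_nonneg (Real.rpow_nonneg hT.le _) hΓ1)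
        (mul_nonneg (Real.rpow_nonneg hT.le _) hΓ2)
    exact mul_nonneg (mul_nonneg hKpos.le hmid) hExpos.le
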